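/- Tarski's Undefinability Theorem implies the Semantic Diagonal Lemma: if no formula defines the set of Gödel codes of true sentences in ℕ, then for every formula Ψ(x) there exists a sentence θ such that ℕ ⊨ Ψ(⌜θ⌝) ↔ θ. -/

import Mathlib

open FirstOrder Language

/-- Function symbols of the language of arithmetic: 0, 1, +, ×. -/
inductive ArithFunc : ℕ → Type
  | zero : ArithFunc 0
  | one : ArithFunc 0
  | add : ArithFunc 2
  | mul : ArithFunc 2

/-- Relation symbols of the language of arithmetic: <. -/
inductive ArithRel : ℕ → Type
  | lt : ArithRel 2

/-- The first-order language of arithmetic. -/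
def LA : FirstOrder.Language := ⟨ArithFunc, ArithRel⟩

/-- The standard model ℕ of arithmetic. -/
instance : LA.Structure ℕ where
  funMap := fun {_} f => match f with
    | .zero => fun _ => 0
    | .one => fun _ => 1
    | .add => fun v => v 0 + v 1
    | .mul => fun v => v 0 * v 1
  RelMap := fun {_} r => match r with
    | .lt => fun v => v 0 < v 1

instance : Encodable (Σ n, LA.Functions n) :=
  Encodable.ofEquiv (Fin 4)
    { toFun := fun f => match f with
        | ⟨0, .zero⟩ => 0
        | ⟨0, .one⟩ => 1
        | ⟨2, .add⟩ => 2
        | ⟨2, .mul⟩ => 3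
      invFun := fun i => match i with
        | 0 => ⟨0, .zero⟩
        | 1 => ⟨0, .one⟩
        | 2 => ⟨2, .add⟩
        | 3 => ⟨2, .mul⟩
      left_inv := by rintro ⟨n, f⟩ <;> cases f <;> rfl
      right_inv := by intro i; fin_cases i <;> rfl }

instance : Encodable (Σ n, LA.Relations n) :=
  Encodable.ofEquiv (Fin 1)
    { toFun := fun f => match f with
        | ⟨2, .lt⟩ => 0
      invFun := fun _ => ⟨2, .lt⟩
      left_inv := by rintro ⟨n, r⟩; cases r; rfl
      right_inv := by intro i; fin_cases i; rfl }

/-- A canonical (computable, injective) Gödel numbering `⌜·⌝` of sentences,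
via Mathlib's list encoding of first-order formulas. -/
def godelCode (φ : LA.Sentence) : ℕ :=
  Encodable.encode φ.listEncode

/-- The numeral `n̄`: `0̄ = 0`, `1̄ = 1`, `(m+1)̄ = 1 + m̄`. -/
def numeral (α : Type) : ℕ → LA.Term α
  | 0 => Constants.term ArithFunc.zero
  | 1 => Constants.term ArithFunc.one
  | n + 2 => Functions.apply₂ (L := LA) ArithFunc.add
      (Constants.term ArithFunc.one) (numeral α (n + 1))

/-- `ℕ ⊨ Ψ(⌜θ⌝)`: the formula `Ψ(x)` holds in the standard model ℕ at the
Gödel code of the sentence `θ`. -/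
def RealizeAtCode (Ψ : LA.Formula (Fin 1)) (θ : LA.Sentence) : Prop :=
  Ψ.Realize (M := ℕ) (fun _ => (godelCode θ : ℕ))

/-- A theory is consistent iff it does not prove (have as a consequence) falsum. -/
def Consistent (T : LA.Theory) : Prop :=
  ¬ (T ⊨ᵇ (⊥ : LA.Sentence))

/-- The sentence `Ψ(⌜θ⌝) ↔ θ`. -/
def diagBicond (Ψ : LA.Formula (Fin 1)) (θ : LA.Sentence) : LA.Sentence :=
  (Ψ.subst (fun _ => numeral Empty (godelCode θ))) ⇔ θ

/-- The term `t + 1` (successor). -/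
def succT {α : Type} {n : ℕ} (t : LA.Term (α ⊕ Fin n)) : LA.Term (α ⊕ Fin n) :=
  Functions.apply₂ (L := LA) ArithFunc.add t (Constants.term ArithFunc.one)

/-- The term `0`. -/
def zeroT {α : Type} {n : ℕ} : LA.Term (α ⊕ Fin n) := Constants.term (L := LA) ArithFunc.zero

/-- The term `t + s`. -/
def addT {α : Type} {n : ℕ} (t s : LA.Term (α ⊕ Fin n)) : LA.Term (α ⊕ Fin n) :=
  Functions.apply₂ (L := LA) ArithFunc.add t s

/-- The term `t * s`. -/
def mulT {α : Type} {n : ℕ} (t s : LA.Term (α ⊕ Fin n)) : LA.Term (α ⊕ Fin n) :=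
  Functions.apply₂ (L := LA) ArithFunc.mul t s

/-- The atomic formula `t < s`. -/
def ltF {α : Type} {n : ℕ} (t s : LA.Term (α ⊕ Fin n)) : LA.BoundedFormula α n :=
  Relations.boundedFormula₂ (L := LA) ArithRel.lt t s

/-- Robinson's arithmetic Q. -/
def Q : LA.Theory :=
  { ∀' ∼(succT &0 =' zeroT),
    ∀' ∀' (succT &0 =' succT &1 ⟹ &0 =' &1),
    ∀' (∼(&0 =' zeroT) ⟹ ∃' (&0 =' succT &1)),
    ∀' (addT &0 zeroT =' &0),
    ∀' ∀' (addT &0 (succT &1) =' succT (addT &0 &1)),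
    ∀' (mulT &0 zeroT =' zeroT),
    ∀' ∀' (mulT &0 (succT &1) =' addT (mulT &0 &1) &0),
    ∀' ∀' (ltF &0 &1 ⇔ ∃' (addT &0 (succT &2) =' &1)) }

/-- A theory is recursively enumerable iff its set of Gödel codes is the domain
of a partial recursive function. -/
def RETheory (T : LA.Theory) : Prop :=
  ∃ f : ℕ →. Unit, Partrec f ∧ ∀ φ : LA.Sentence, φ ∈ T ↔ (f (godelCode φ)).Dom
/-! ### Phase 1: definability of predicates over ℕ in LA -/

/-- A predicate on valuations is definable in `LA` over `ℕ`. -/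
def Defin {α : Type} (P : (α → ℕ) → Prop) : Prop :=
  ∃ φ : LA.Formula α, ∀ v, φ.Realize (M := ℕ) v ↔ P v

namespace Defin

theorem congr {α : Type} {P Q : (α → ℕ) → Prop} (h : Defin P) (hpq : ∀ v, P v ↔ Q v) :
    Defin Q := by
  obtain ⟨φ, hφ⟩ := h
  exact ⟨φ, fun v => (hφ v).trans (hpq v)⟩

theorem and {α : Type} {P Q : (α → ℕ) → Prop} (hP : Defin P) (hQ : Defin Q) :
    Defin (fun v => P v ∧ Q v) := by
  obtain ⟨φ, hφ⟩ := hP; obtain ⟨ψ, hψ⟩ := hQ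
  exact ⟨φ ⊓ ψ, fun v => by rw [Formula.realize_inf, hφ, hψ]⟩

theorem or {α : Type} {P Q : (α → ℕ) → Prop} (hP : Defin P) (hQ : Defin Q) :
    Defin (fun v => P v ∨ Q v) := by
  obtain ⟨φ, hφ⟩ := hP; obtain ⟨ψ, hψ⟩ := hQ
  exact ⟨φ ⊔ ψ, fun v => by rw [Formula.realize_sup, hφ, hψ]⟩

theorem not {α : Type} {P : (α → ℕ) → Prop} (hP : Defin P) :
    Defin (fun v => ¬ P v) := by
  obtain ⟨φ, hφ⟩ := hP
  exact ⟨φ.not, fun v => by rw [Formula.realize_not, hφ]⟩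

theorem subst {α β : Type} (ρ : α → β) {P : (α → ℕ) → Prop} (h : Defin P) :
    Defin (fun v : β → ℕ => P (fun a => v (ρ a))) := by
  obtain ⟨φ, hφ⟩ := h
  exact ⟨φ.relabel ρ, fun v => by rw [Formula.realize_relabel]; exact hφ _⟩

theorem exFin {α : Type} {m : ℕ} {P : (α ⊕ Fin m → ℕ) → Prop} (h : Defin P) :
    Defin (fun v : α → ℕ => ∃ w : Fin m → ℕ, P (Sum.elim v w)) := by
  obtain ⟨φ, hφ⟩ := h
  refine ⟨φ.iExs (Fin m), fun v => ?_⟩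
  rw [Formula.realize_iExs]
  constructor
  · rintro ⟨w, hw⟩; exact ⟨w, (hφ _).1 (by simpa using hw)⟩
  · rintro ⟨w, hw⟩; exact ⟨w, by simpa using (hφ _).2 hw⟩

theorem ex1 {α : Type} {P : (α ⊕ Fin 1 → ℕ) → Prop} (h : Defin P) :
    Defin (fun v : α → ℕ => ∃ x : ℕ, P (Sum.elim v (fun _ => x))) := by
  refine (exFin h).congr fun v => ?_
  constructor
  · rintro ⟨w, hw⟩
    refine ⟨w 0, ?_⟩
    have hweq : (fun _ : Fin 1 => w 0) = w :=
      funext fun j => by rw [Subsingleton.elim (0 : Fin 1) j]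
    rw [hweq]; exact hw
  · rintro ⟨x, hx⟩; exact ⟨fun _ => x, hx⟩

theorem all1 {α : Type} {P : (α ⊕ Fin 1 → ℕ) → Prop} (h : Defin P) :
    Defin (fun v : α → ℕ => ∀ x : ℕ, P (Sum.elim v (fun _ => x))) := by
  have := (ex1 h.not).not
  exact this.congr fun v => by push_neg; rfl

end Defin

theorem defin_add : Defin (fun v : Fin 3 → ℕ => v 0 + v 1 = v 2) := by
  refine ⟨Term.equal (Functions.apply₂ ArithFunc.add (Term.var 0) (Term.var 1)) (Term.var 2),
    fun v => ?_⟩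
  simp [Term.realize_functions_apply₂]
  rfl

theorem defin_mul : Defin (fun v : Fin 3 → ℕ => v 0 * v 1 = v 2) := by
  refine ⟨Term.equal (Functions.apply₂ ArithFunc.mul (Term.var 0) (Term.var 1)) (Term.var 2),
    fun v => ?_⟩
  simp [Term.realize_functions_apply₂]
  rfl

theorem defin_lt : Defin (fun v : Fin 2 → ℕ => v 0 < v 1) := by
  refine ⟨Relations.formula₂ ArithRel.lt (Term.var 0) (Term.var 1), fun v => ?_⟩
  simp [Formula.realize_rel₂]
  rfl

theorem defin_eq : Defin (fun v : Fin 2 → ℕ => v 0 = v 1) := by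
  refine ⟨Term.equal (Term.var 0) (Term.var 1), fun v => ?_⟩
  simp

theorem defin_one : Defin (fun v : Fin 1 → ℕ => v 0 = 1) := by
  refine ⟨Term.equal (Term.var 0) (Constants.term ArithFunc.one), fun v => ?_⟩
  simp
  rfl
/-! ### Phase 1b: pair and beta graphs -/

theorem defin_pair : Defin (fun v : Fin 3 → ℕ => Nat.pair (v 0) (v 1) = v 2) := by
  have h1 : Defin (fun u : Fin 3 ⊕ Fin 2 → ℕ =>
      (u (Sum.inl 0) < u (Sum.inl 1) ∧ u (Sum.inl 1) * u (Sum.inl 1) = u (Sum.inr 0) ∧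
        u (Sum.inr 0) + u (Sum.inl 0) = u (Sum.inl 2)) ∨
      (¬ (u (Sum.inl 0) < u (Sum.inl 1)) ∧ u (Sum.inl 0) * u (Sum.inl 0) = u (Sum.inr 0) ∧
        u (Sum.inr 0) + u (Sum.inl 0) = u (Sum.inr 1) ∧
        u (Sum.inr 1) + u (Sum.inl 1) = u (Sum.inl 2))) := by
    refine Defin.or (Defin.and ?_ (Defin.and ?_ ?_)) (Defin.and ?_ (Defin.and ?_ (Defin.and ?_ ?_)))
    · exact defin_lt.subst ![Sum.inl 0, Sum.inl 1]
    · exact defin_mul.subst ![Sum.inl 1, Sum.inl 1, Sum.inr 0]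
    · exact defin_add.subst ![Sum.inr 0, Sum.inl 0, Sum.inl 2]
    · exact (defin_lt.subst ![Sum.inl 0, Sum.inl 1]).not
    · exact defin_mul.subst ![Sum.inl 0, Sum.inl 0, Sum.inr 0]
    · exact defin_add.subst ![Sum.inr 0, Sum.inl 0, Sum.inr 1]
    · exact defin_add.subst ![Sum.inr 1, Sum.inl 1, Sum.inl 2]
  refine h1.exFin.congr fun v => ?_
  simp only [Sum.elim_inl, Sum.elim_inr, Nat.pair]
  constructor
  · rintro ⟨w, ⟨hlt, hm, ha⟩ | ⟨hlt, hm, ha, hb⟩⟩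
    · rw [if_pos hlt, ← ha, ← hm]
    · rw [if_neg hlt, ← hb, ← ha, ← hm]
  · intro h
    by_cases hlt : v 0 < v 1
    · rw [if_pos hlt] at h
      exact ⟨![v 1 * v 1, 0], Or.inl ⟨hlt, rfl, h⟩⟩
    · rw [if_neg hlt] at h
      exact ⟨![v 0 * v 0, v 0 * v 0 + v 0], Or.inr ⟨hlt, rfl, rfl, h⟩⟩

/-- Gödel's beta function, with `c` coding the pair `(value-code, modulus-base)`. -/
def beta (c i : ℕ) : ℕ := c.unpair.1 % (1 + (i + 1) * c.unpair.2)

theorem defin_beta : Defin (fun v : Fin 3 → ℕ => beta (v 0) (v 1) = v 2) := by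
  -- w0 = a, w1 = d, w2 = 1, w3 = i+1, w4 = (i+1)*d, w5 = m, w6 = q, w7 = q*m
  have h1 : Defin (fun u : Fin 3 ⊕ Fin 8 → ℕ =>
      Nat.pair (u (Sum.inr 0)) (u (Sum.inr 1)) = u (Sum.inl 0) ∧
      u (Sum.inr 2) = 1 ∧
      u (Sum.inl 1) + u (Sum.inr 2) = u (Sum.inr 3) ∧
      u (Sum.inr 3) * u (Sum.inr 1) = u (Sum.inr 4) ∧
      u (Sum.inr 2) + u (Sum.inr 4) = u (Sum.inr 5) ∧
      u (Sum.inr 6) * u (Sum.inr 5) = u (Sum.inr 7) ∧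
      u (Sum.inr 7) + u (Sum.inl 2) = u (Sum.inr 0) ∧
      u (Sum.inl 2) < u (Sum.inr 5)) := by
    refine Defin.and ?_ (Defin.and ?_ (Defin.and ?_ (Defin.and ?_ (Defin.and ?_
      (Defin.and ?_ (Defin.and ?_ ?_))))))
    · exact defin_pair.subst ![Sum.inr 0, Sum.inr 1, Sum.inl 0]
    · exact defin_one.subst ![Sum.inr 2]
    · exact defin_add.subst ![Sum.inl 1, Sum.inr 2, Sum.inr 3]
    · exact defin_mul.subst ![Sum.inr 3, Sum.inr 1, Sum.inr 4]
    · exact defin_add.subst ![Sum.inr 2, Sum.inr 4, Sum.inr 5]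
    · exact defin_mul.subst ![Sum.inr 6, Sum.inr 5, Sum.inr 7]
    · exact defin_add.subst ![Sum.inr 7, Sum.inl 2, Sum.inr 0]
    · exact defin_lt.subst ![Sum.inl 2, Sum.inr 5]
  refine h1.exFin.congr fun v => ?_
  simp only [Sum.elim_inl, Sum.elim_inr]
  unfold beta
  constructor
  · rintro ⟨w, hpair, h2, h3, h4, h5, h6, h7, h8⟩
    have ha : w 0 = (v 0).unpair.1 := by rw [← hpair, Nat.unpair_pair]
    have hd : w 1 = (v 0).unpair.2 := by rw [← hpair, Nat.unpair_pair]
    have hm : 1 + (v 1 + 1) * (v 0).unpair.2 = w 5 := by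
      rw [← hd, ← h5, ← h4, ← h3, h2]
    rw [← hm] at h8
    rw [← ha, ← h7, ← h6, ← hm, Nat.mul_comm (w 6), Nat.mul_add_mod, Nat.mod_eq_of_lt h8]
  · intro h
    set a := (v 0).unpair.1 with ha
    set d := (v 0).unpair.2 with hd
    set m := 1 + (v 1 + 1) * d with hmdef
    have hmpos : 0 < m := by omega
    refine ⟨![a, d, 1, v 1 + 1, (v 1 + 1) * d, m, a / m, a / m * m], ?_, rfl, rfl, rfl, rfl, rfl,
      ?_, ?_⟩
    · exact Nat.pair_unpair (v 0)
    · show a / m * m + v 2 = a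
      rw [← h, Nat.mul_comm (a / m) m]
      exact Nat.div_add_mod a m
    · show v 2 < m
      rw [← h]
      exact Nat.mod_lt _ hmpos
/-! ### Phase 1c: the beta-function sequence lemma -/

theorem foldr_max_le {l : List ℕ} {x : ℕ} (hx : x ∈ l) : x ≤ l.foldr max 0 := by
  induction l with
  | nil => cases hx
  | cons a t ih =>
    rcases List.mem_cons.1 hx with rfl | h
    · exact le_max_left _ _
    · exact le_trans (ih h) (le_max_right _ _)

theorem crt_list (m r : ℕ → ℕ) (k : ℕ)
    (hcop : ∀ i j, i < j → j < k → Nat.Coprime (m i) (m j)) :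
    ∃ c, ∀ i, i < k → c % m i = r i % m i := by
  induction k with
  | zero => exact ⟨0, fun i hi => absurd hi (Nat.not_lt_zero i)⟩
  | succ k ih =>
    obtain ⟨c, hc⟩ := ih (fun i j hij hj => hcop i j hij (hj.trans (Nat.lt_succ_self k)))
    have hcp : Nat.Coprime (((List.range k).map m).prod) (m k) := by
      refine (Nat.coprime_list_prod_right_iff.2 ?_).symm
      intro n hn
      obtain ⟨i, hi, rfl⟩ := List.mem_map.1 hn
      exact (hcop i k (List.mem_range.1 hi) (Nat.lt_succ_self k)).symm
    obtain ⟨z, hz1, hz2⟩ := Nat.chineseRemainder hcp c (r k)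
    refine ⟨z, fun i hi => ?_⟩
    rcases Nat.lt_succ_iff_lt_or_eq.1 hi with h | rfl
    · have hdvd : m i ∣ ((List.range k).map m).prod :=
        List.dvd_prod (List.mem_map_of_mem (f := m) (List.mem_range.2 h))
      have := (Nat.ModEq.of_dvd hdvd hz1)
      rw [Nat.ModEq] at this
      rw [this, hc i h]
    · exact hz2

theorem beta_exists (l : List ℕ) :
    ∃ c, ∀ i (hi : i < l.length), beta c i = l[i] := by
  classical
  set N := l.length + l.foldr max 0 with hN
  set d := N.factorial with hd
  set m : ℕ → ℕ := fun i => 1 + (i + 1) * d with hm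
  have hdpos : 0 < d := N.factorial_pos
  have hlen : l.length ≤ N := Nat.le_add_right _ _
  have hval : ∀ x ∈ l, x ≤ N := fun x hx => le_trans (foldr_max_le hx) (Nat.le_add_left _ _)
  have hNd : N ≤ d := Nat.self_le_factorial N
  have hcopd : ∀ i, Nat.Coprime (m i) d := by
    intro i
    have h1 : Nat.gcd d (1 + (i + 1) * d) = Nat.gcd d 1 := Nat.gcd_add_mul_right_right d 1 (i + 1)
    have : Nat.Coprime d (m i) := by
      unfold Nat.Coprime
      rw [hm]
      simpa using h1
    exact this.symm
  have hcop : ∀ i j, i < j → j < l.length → Nat.Coprime (m i) (m j) := by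
    intro i j hij hj
    obtain ⟨s, rfl⟩ := Nat.exists_eq_add_of_lt hij
    set e := Nat.gcd (m i) (m (i + s + 1)) with he
    have h1 : e ∣ m i := Nat.gcd_dvd_left _ _
    have h2 : e ∣ m (i + s + 1) := Nat.gcd_dvd_right _ _
    have heq : m i + (s + 1) * d = m (i + s + 1) := by
      simp only [hm]; ring
    have h3 : e ∣ (s + 1) * d := by
      have := Nat.dvd_sub h2 h1
      rwa [← heq, Nat.add_sub_cancel_left] at this
    have hed : Nat.Coprime e d := Nat.Coprime.coprime_dvd_left h1 (hcopd i)
    have h4 : e ∣ s + 1 := hed.dvd_of_dvd_mul_right h3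
    have h5 : (s + 1) ∣ d := Nat.dvd_factorial (Nat.succ_pos s) (by omega)
    have h6 : e ∣ d := h4.trans h5
    have : e ∣ 1 := by
      have := Nat.dvd_gcd dvd_rfl h6
      rwa [hed] at this
    exact Nat.dvd_one.1 this
  obtain ⟨c0, hc0⟩ := crt_list m (fun i => l.getD i 0) l.length hcop
  refine ⟨Nat.pair c0 d, fun i hi => ?_⟩
  have hgd : l.getD i 0 = l[i] := List.getD_eq_getElem l 0 hi
  have hlt : l[i] < m i := by
    have : l[i] ≤ N := hval _ (List.getElem_mem _)
    have hle : d ≤ (i + 1) * d := Nat.le_mul_of_pos_left d (Nat.succ_pos i)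
    simp only [hm]
    omega
  show (Nat.pair c0 d).unpair.1 % (1 + (i + 1) * (Nat.pair c0 d).unpair.2) = l[i]
  rw [Nat.unpair_pair]
  have := hc0 i hi
  rw [show (1 + (i + 1) * d) = m i from rfl, this, hgd, Nat.mod_eq_of_lt hlt]
/-! ### Phase 1d: primitive recursive functions have definable graphs -/

theorem defin_zero : Defin (fun v : Fin 1 → ℕ => v 0 = 0) := by
  refine ⟨Term.equal (Term.var 0) (Constants.term ArithFunc.zero), fun v => ?_⟩
  simp
  rfl

theorem Defin.imp {α : Type} {P Q : (α → ℕ) → Prop} (hP : Defin P) (hQ : Defin Q) :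
    Defin (fun v => P v → Q v) :=
  (hP.not.or hQ).congr fun v => by rw [← imp_iff_not_or]

theorem primrec_defin {f : ℕ → ℕ} (hf : Nat.Primrec f) :
    Defin (fun v : Fin 2 → ℕ => f (v 0) = v 1) := by
  induction hf with
  | zero =>
    exact (defin_zero.subst ![1]).congr fun v => by simp [eq_comm]
  | succ =>
    have h1 : Defin (fun u : Fin 2 ⊕ Fin 1 → ℕ =>
        u (Sum.inr 0) = 1 ∧ u (Sum.inl 0) + u (Sum.inr 0) = u (Sum.inl 1)) :=
      Defin.and (defin_one.subst ![Sum.inr 0]) (defin_add.subst ![Sum.inl 0, Sum.inr 0, Sum.inl 1])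
    refine h1.exFin.congr fun v => ?_
    simp only [Sum.elim_inl, Sum.elim_inr]
    constructor
    · rintro ⟨w, h1, h2⟩; rw [← h2, h1]
    · intro h; exact ⟨![1], rfl, by rw [← h]; rfl⟩
  | left =>
    have h1 : Defin (fun u : Fin 2 ⊕ Fin 1 → ℕ =>
        Nat.pair (u (Sum.inl 1)) (u (Sum.inr 0)) = u (Sum.inl 0)) :=
      defin_pair.subst ![Sum.inl 1, Sum.inr 0, Sum.inl 0]
    refine h1.exFin.congr fun v => ?_
    simp only [Sum.elim_inl, Sum.elim_inr]
    constructor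
    · rintro ⟨w, hw⟩; rw [← hw, Nat.unpair_pair]
    · intro h
      refine ⟨![(v 0).unpair.2], ?_⟩
      show Nat.pair (v 1) ((v 0).unpair.2) = v 0
      rw [← h, Nat.pair_unpair]
  | right =>
    have h1 : Defin (fun u : Fin 2 ⊕ Fin 1 → ℕ =>
        Nat.pair (u (Sum.inr 0)) (u (Sum.inl 1)) = u (Sum.inl 0)) :=
      defin_pair.subst ![Sum.inr 0, Sum.inl 1, Sum.inl 0]
    refine h1.exFin.congr fun v => ?_
    simp only [Sum.elim_inl, Sum.elim_inr]
    constructor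
    · rintro ⟨w, hw⟩; rw [← hw, Nat.unpair_pair]
    · intro h
      refine ⟨![(v 0).unpair.1], ?_⟩
      show Nat.pair ((v 0).unpair.1) (v 1) = v 0
      rw [← h, Nat.pair_unpair]
  | @pair f g _ _ ihf ihg =>
    have h1 : Defin (fun u : Fin 2 ⊕ Fin 2 → ℕ =>
        f (u (Sum.inl 0)) = u (Sum.inr 0) ∧ g (u (Sum.inl 0)) = u (Sum.inr 1) ∧
          Nat.pair (u (Sum.inr 0)) (u (Sum.inr 1)) = u (Sum.inl 1)) :=
      Defin.and (ihf.subst ![Sum.inl 0, Sum.inr 0]) (Defin.and (ihg.subst ![Sum.inl 0, Sum.inr 1])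
        (defin_pair.subst ![Sum.inr 0, Sum.inr 1, Sum.inl 1]))
    refine h1.exFin.congr fun v => ?_
    simp only [Sum.elim_inl, Sum.elim_inr]
    constructor
    · rintro ⟨w, h1, h2, h3⟩; rw [← h3, ← h1, ← h2]
    · intro h; exact ⟨![f (v 0), g (v 0)], rfl, rfl, h⟩
  | @comp f g _ _ ihf ihg =>
    have h1 : Defin (fun u : Fin 2 ⊕ Fin 1 → ℕ =>
        g (u (Sum.inl 0)) = u (Sum.inr 0) ∧ f (u (Sum.inr 0)) = u (Sum.inl 1)) :=
      Defin.and (ihg.subst ![Sum.inl 0, Sum.inr 0]) (ihf.subst ![Sum.inr 0, Sum.inl 1])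
    refine h1.exFin.congr fun v => ?_
    simp only [Sum.elim_inl, Sum.elim_inr]
    constructor
    · rintro ⟨w, h1, h2⟩; rw [← h2, ← h1]
    · intro h; exact ⟨![g (v 0)], rfl, h⟩
  | @prec f g _ _ ihf ihg =>
    set H : ℕ → ℕ → ℕ := fun z => Nat.rec (f z) (fun y IH => g (Nat.pair z (Nat.pair y IH)))
      with hH
    -- inner step predicate, over (Fin 2 ⊕ Fin 5) ⊕ Fin 1, then ⊕ Fin 6
    have hinner : Defin (fun u : ((Fin 2 ⊕ Fin 5) ⊕ Fin 1) ⊕ Fin 6 → ℕ =>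
        beta (u (Sum.inl (Sum.inl (Sum.inr 2)))) (u (Sum.inl (Sum.inr 0))) = u (Sum.inr 0) ∧
        Nat.pair (u (Sum.inl (Sum.inr 0))) (u (Sum.inr 0)) = u (Sum.inr 1) ∧
        Nat.pair (u (Sum.inl (Sum.inl (Sum.inr 0)))) (u (Sum.inr 1)) = u (Sum.inr 2) ∧
        g (u (Sum.inr 2)) = u (Sum.inr 3) ∧
        u (Sum.inr 4) = 1 ∧
        u (Sum.inl (Sum.inr 0)) + u (Sum.inr 4) = u (Sum.inr 5) ∧
        beta (u (Sum.inl (Sum.inl (Sum.inr 2)))) (u (Sum.inr 5)) = u (Sum.inr 3)) := by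
      refine Defin.and ?_ (Defin.and ?_ (Defin.and ?_ (Defin.and ?_ (Defin.and ?_
        (Defin.and ?_ ?_)))))
      · exact defin_beta.subst ![Sum.inl (Sum.inl (Sum.inr 2)), Sum.inl (Sum.inr 0), Sum.inr 0]
      · exact defin_pair.subst ![Sum.inl (Sum.inr 0), Sum.inr 0, Sum.inr 1]
      · exact defin_pair.subst ![Sum.inl (Sum.inl (Sum.inr 0)), Sum.inr 1, Sum.inr 2]
      · exact ihg.subst ![Sum.inr 2, Sum.inr 3]
      · exact defin_one.subst ![Sum.inr 4]
      · exact defin_add.subst ![Sum.inl (Sum.inr 0), Sum.inr 4, Sum.inr 5]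
      · exact defin_beta.subst ![Sum.inl (Sum.inl (Sum.inr 2)), Sum.inr 5, Sum.inr 3]
    have hstep : Defin (fun u : (Fin 2 ⊕ Fin 5) ⊕ Fin 1 → ℕ =>
        u (Sum.inr 0) < u (Sum.inl (Sum.inr 1)) → ∃ t : Fin 6 → ℕ,
          beta (u (Sum.inl (Sum.inr 2))) (u (Sum.inr 0)) = t 0 ∧
          Nat.pair (u (Sum.inr 0)) (t 0) = t 1 ∧
          Nat.pair (u (Sum.inl (Sum.inr 0))) (t 1) = t 2 ∧
          g (t 2) = t 3 ∧ t 4 = 1 ∧ u (Sum.inr 0) + t 4 = t 5 ∧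
          beta (u (Sum.inl (Sum.inr 2))) (t 5) = t 3) := by
      exact ((defin_lt.subst ![Sum.inr 0, Sum.inl (Sum.inr 1)]).imp hinner.exFin).congr
        fun u => Iff.rfl
    have h1 : Defin (fun u : Fin 2 ⊕ Fin 5 → ℕ =>
        Nat.pair (u (Sum.inr 0)) (u (Sum.inr 1)) = u (Sum.inl 0) ∧
        f (u (Sum.inr 0)) = u (Sum.inr 3) ∧
        beta (u (Sum.inr 2)) (u (Sum.inr 4)) = u (Sum.inr 3) ∧
        u (Sum.inr 4) = 0 ∧
        beta (u (Sum.inr 2)) (u (Sum.inr 1)) = u (Sum.inl 1) ∧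
        ∀ x : ℕ, x < u (Sum.inr 1) → ∃ t : Fin 6 → ℕ,
          beta (u (Sum.inr 2)) x = t 0 ∧
          Nat.pair x (t 0) = t 1 ∧
          Nat.pair (u (Sum.inr 0)) (t 1) = t 2 ∧
          g (t 2) = t 3 ∧ t 4 = 1 ∧ x + t 4 = t 5 ∧
          beta (u (Sum.inr 2)) (t 5) = t 3) := by
      refine Defin.and ?_ (Defin.and ?_ (Defin.and ?_ (Defin.and ?_ (Defin.and ?_ ?_))))
      · exact defin_pair.subst ![Sum.inr 0, Sum.inr 1, Sum.inl 0]
      · exact ihf.subst ![Sum.inr 0, Sum.inr 3]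
      · exact defin_beta.subst ![Sum.inr 2, Sum.inr 4, Sum.inr 3]
      · exact defin_zero.subst ![Sum.inr 4]
      · exact defin_beta.subst ![Sum.inr 2, Sum.inr 1, Sum.inl 1]
      · exact hstep.all1.congr fun u => Iff.rfl
    refine h1.exFin.congr fun v => ?_
    simp only [Sum.elim_inl, Sum.elim_inr]
    constructor
    · rintro ⟨w, hpair, hf0, hb0, hz0, hbn, hall⟩
      have key : ∀ i, i ≤ w 1 → beta (w 2) i = H (w 0) i := by
        intro i
        induction i with
        | zero =>
          intro _
          have hrfl : H (w 0) 0 = f (w 0) := rfl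
          rw [hrfl, hf0, ← hb0, hz0]
        | succ y ih =>
          intro hy
          obtain ⟨t, ht0, ht1, ht2, ht3, ht4, ht5, ht6⟩ := hall y (by omega)
          have hby : beta (w 2) y = H (w 0) y := ih (by omega)
          have ht5' : t 5 = y + 1 := by omega
          rw [ht5'] at ht6
          rw [ht6, ← ht3, ← ht2, ← ht1, ← ht0, hby]
          all_goals rfl
      rw [← hpair]
      simp only [Nat.unpaired, Nat.unpair_pair]
      rw [← hbn, key (w 1) le_rfl]
      all_goals rfl
    · intro hv
      set z := (v 0).unpair.1 with hz
      set n := (v 0).unpair.2 with hn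
      obtain ⟨c, hc⟩ := beta_exists ((List.range (n + 1)).map (H z))
      have hc' : ∀ i, i ≤ n → beta c i = H z i := by
        intro i hi
        have hilen : i < ((List.range (n + 1)).map (H z)).length := by simp; omega
        have := hc i hilen
        rwa [List.getElem_map, List.getElem_range] at this
      refine ⟨![z, n, c, f z, 0], ?_, rfl, ?_, rfl, ?_, ?_⟩
      · exact Nat.pair_unpair (v 0)
      · show beta c 0 = f z
        rw [hc' 0 (Nat.zero_le n)]
        rfl
      · show beta c n = v 1
        rw [hc' n le_rfl, ← hv]
      · intro x hx
        have hx' : x < n := hx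
        refine ⟨![beta c x, Nat.pair x (beta c x), Nat.pair z (Nat.pair x (beta c x)),
          H z (x + 1), 1, x + 1], rfl, rfl, rfl, ?_, rfl, rfl, ?_⟩
        · show g (Nat.pair z (Nat.pair x (beta c x))) = H z (x + 1)
          rw [hc' x (le_of_lt hx')]
          all_goals rfl
        · show beta c (x + 1) = H z (x + 1)
          exact hc' (x + 1) (by omega)
/-! ### Phase 2a: decoding numbers to terms and formulas -/

def decT (m k : ℕ) : LA.Term (Empty ⊕ Fin k) :=
  if h0 : m = 0 then Constants.term ArithFunc.zero
  else
    let p := m - 1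
    let tag := p.unpair.1
    let a := p.unpair.2
    if tag = 0 then
      if h : a < k then Term.var (Sum.inr ⟨a, h⟩) else Constants.term ArithFunc.zero
    else if tag = 1 then Constants.term ArithFunc.zero
    else if tag = 2 then Constants.term ArithFunc.one
    else if tag = 3 then
      Functions.apply₂ ArithFunc.add (decT a.unpair.1 k) (decT a.unpair.2 k)
    else if tag = 4 then
      Functions.apply₂ ArithFunc.mul (decT a.unpair.1 k) (decT a.unpair.2 k)
    else Constants.term ArithFunc.zero
termination_by m
decreasing_by
  all_goals
    have h1 := Nat.unpair_right_le (m - 1)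
    have h2 := Nat.unpair_left_le ((m - 1).unpair.2)
    have h3 := Nat.unpair_right_le ((m - 1).unpair.2)
    omega

def decF (n k : ℕ) : LA.BoundedFormula Empty k :=
  if h0 : n = 0 then BoundedFormula.falsum
  else
    let p := n - 1
    let tag := p.unpair.1
    let a := p.unpair.2
    if tag = 1 then
      BoundedFormula.equal (decT a.unpair.1 k) (decT a.unpair.2 k)
    else if tag = 2 then
      BoundedFormula.rel ArithRel.lt ![decT a.unpair.1 k, decT a.unpair.2 k]
    else if tag = 3 then
      BoundedFormula.imp (decF a.unpair.1 k) (decF a.unpair.2 k)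
    else if tag = 4 then
      BoundedFormula.all (decF a (k + 1))
    else BoundedFormula.falsum
termination_by n
decreasing_by
  all_goals
    have h1 := Nat.unpair_right_le (n - 1)
    have h2 := Nat.unpair_left_le ((n - 1).unpair.2)
    have h3 := Nat.unpair_right_le ((n - 1).unpair.2)
    omega

theorem decT_surj {k : ℕ} (t : LA.Term (Empty ⊕ Fin k)) : ∃ m, decT m k = t := by
  induction t with
  | var v =>
    rcases v with e | i
    · exact e.elim
    · refine ⟨Nat.pair 0 i + 1, ?_⟩
      rw [decT]
      simp [Nat.unpair_pair]
  | @func l f ts ih =>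
    cases f with
    | zero =>
      refine ⟨0, ?_⟩
      rw [decT]
      simp only [↓reduceDIte]
      show Term.func ArithFunc.zero default = Term.func ArithFunc.zero ts
      exact congrArg _ (funext fun i => i.elim0)
    | one =>
      refine ⟨Nat.pair 2 0 + 1, ?_⟩
      rw [decT]
      simp only [Nat.add_eq_zero, Nat.succ_ne_zero, and_false, ↓reduceDIte, Nat.add_sub_cancel,
        Nat.unpair_pair]
      show Term.func ArithFunc.one default = Term.func ArithFunc.one ts
      exact congrArg _ (funext fun i => i.elim0)
    | add =>
      obtain ⟨m₀, hm₀⟩ := ih 0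
      obtain ⟨m₁, hm₁⟩ := ih 1
      refine ⟨Nat.pair 3 (Nat.pair m₀ m₁) + 1, ?_⟩
      rw [decT]
      simp only [Nat.add_eq_zero, Nat.succ_ne_zero, and_false, ↓reduceDIte, Nat.add_sub_cancel,
        Nat.unpair_pair]
      norm_num
      rw [hm₀, hm₁]
      show Term.func ArithFunc.add ![ts 0, ts 1] = Term.func ArithFunc.add ts
      refine congrArg _ (funext fun i => ?_)
      fin_cases i <;> rfl
    | mul =>
      obtain ⟨m₀, hm₀⟩ := ih 0
      obtain ⟨m₁, hm₁⟩ := ih 1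
      refine ⟨Nat.pair 4 (Nat.pair m₀ m₁) + 1, ?_⟩
      rw [decT]
      simp only [Nat.add_eq_zero, Nat.succ_ne_zero, and_false, ↓reduceDIte, Nat.add_sub_cancel,
        Nat.unpair_pair]
      norm_num
      rw [hm₀, hm₁]
      show Term.func ArithFunc.mul ![ts 0, ts 1] = Term.func ArithFunc.mul ts
      refine congrArg _ (funext fun i => ?_)
      fin_cases i <;> rfl

theorem decF_surj {k : ℕ} (φ : LA.BoundedFormula Empty k) : ∃ n, decF n k = φ := by
  induction φ with
  | falsum => exact ⟨0, by rw [decF]; simp⟩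
  | equal t₁ t₂ =>
    obtain ⟨m₁, hm₁⟩ := decT_surj t₁
    obtain ⟨m₂, hm₂⟩ := decT_surj t₂
    refine ⟨Nat.pair 1 (Nat.pair m₁ m₂) + 1, ?_⟩
    rw [decF]
    simp [Nat.unpair_pair, hm₁, hm₂]
  | @rel k l R ts =>
    cases R
    obtain ⟨m₁, hm₁⟩ := decT_surj (ts 0)
    obtain ⟨m₂, hm₂⟩ := decT_surj (ts 1)
    refine ⟨Nat.pair 2 (Nat.pair m₁ m₂) + 1, ?_⟩
    rw [decF]
    simp only [Nat.add_eq_zero, Nat.succ_ne_zero, and_false, ↓reduceDIte, Nat.add_sub_cancel,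
      Nat.unpair_pair]
    norm_num
    rw [hm₁, hm₂]
    first
      | exact funext fun i => by fin_cases i <;> rfl
      | exact congrArg _ (funext fun i => by fin_cases i <;> rfl)
  | imp φ₁ φ₂ ih₁ ih₂ =>
    obtain ⟨n₁, hn₁⟩ := ih₁
    obtain ⟨n₂, hn₂⟩ := ih₂
    refine ⟨Nat.pair 3 (Nat.pair n₁ n₂) + 1, ?_⟩
    rw [decF]
    simp [Nat.unpair_pair, hn₁, hn₂]
  | all φ ih =>
    obtain ⟨n₁, hn₁⟩ := ih
    refine ⟨Nat.pair 4 n₁ + 1, ?_⟩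
    rw [decF]
    simp [Nat.unpair_pair, hn₁]
/-! ### Phase 2b: numeric computation of Gödel codes -/

def appendC (x y : ℕ) : ℕ :=
  Encodable.encode ((Encodable.decode (α := List ℕ) x).getD []
    ++ (Encodable.decode (α := List ℕ) y).getD [])

theorem encode_list_map {Γ : Type*} [Encodable Γ] (l : List Γ) :
    Encodable.encode (l.map Encodable.encode) = Encodable.encode l := by
  induction l with
  | nil => rfl
  | cons a t ih =>
    rw [List.map_cons, Encodable.encode_list_cons, Encodable.encode_list_cons, ih,
      Encodable.encode_nat]

theorem appendC_encode {Γ : Type*} [Encodable Γ] (l₁ l₂ : List Γ) :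
    appendC (Encodable.encode l₁) (Encodable.encode l₂) = Encodable.encode (l₁ ++ l₂) := by
  rw [← encode_list_map l₁, ← encode_list_map l₂, ← encode_list_map (l₁ ++ l₂)]
  unfold appendC
  rw [Encodable.encodek, Encodable.encodek]
  simp [List.map_append]

def TN (k m : ℕ) : ℕ :=
  if h0 : m = 0 then 3
  else
    let p := m - 1
    let tag := p.unpair.1
    let a := p.unpair.2
    if tag = 0 then (if a < k then Nat.pair (4 * a + 2) 0 + 1 else 3)
    else if tag = 1 then 3
    else if tag = 2 then Nat.pair 3 0 + 1
    else if tag = 3 then Nat.pair 5 (appendC (TN k a.unpair.1) (TN k a.unpair.2)) + 1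
    else if tag = 4 then Nat.pair 7 (appendC (TN k a.unpair.1) (TN k a.unpair.2)) + 1
    else 3
termination_by m
decreasing_by
  all_goals
    have h1 := Nat.unpair_right_le (m - 1)
    have h2 := Nat.unpair_left_le ((m - 1).unpair.2)
    have h3 := Nat.unpair_right_le ((m - 1).unpair.2)
    omega

def FN (k n : ℕ) : ℕ :=
  if h0 : n = 0 then Nat.pair (4 * k + 11) 0 + 1
  else
    let p := n - 1
    let tag := p.unpair.1
    let a := p.unpair.2
    if tag = 1 then
      Nat.pair (2 * Nat.pair k (TN k a.unpair.1))
        (Nat.pair (2 * Nat.pair k (TN k a.unpair.2)) 0 + 1) + 1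
    else if tag = 2 then
      Nat.pair 1 (Nat.pair (4 * k + 3)
        (Nat.pair (2 * Nat.pair k (TN k a.unpair.1))
          (Nat.pair (2 * Nat.pair k (TN k a.unpair.2)) 0 + 1) + 1) + 1) + 1
    else if tag = 3 then Nat.pair 3 (appendC (FN k a.unpair.1) (FN k a.unpair.2)) + 1
    else if tag = 4 then Nat.pair 7 (FN (k + 1) a) + 1
    else Nat.pair (4 * k + 11) 0 + 1
termination_by n
decreasing_by
  all_goals
    have h1 := Nat.unpair_right_le (n - 1)
    have h2 := Nat.unpair_left_le ((n - 1).unpair.2)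
    have h3 := Nat.unpair_right_le ((n - 1).unpair.2)
    omega

theorem encode_single_term_sym {k : ℕ}
    (x : (Empty ⊕ Fin k) ⊕ (Σ i, LA.Functions i)) :
    Encodable.encode [x] = Nat.pair (Encodable.encode x) 0 + 1 := by
  rw [Encodable.encode_list_cons, Encodable.encode_list_nil]

theorem TN_spec (m k : ℕ) : TN k m = Encodable.encode (Term.listEncode (decT m k)) := by
  induction m using Nat.strong_induction_on with
  | _ m ih =>
    rw [TN, decT]
    by_cases h0 : m = 0
    · rw [dif_pos h0, dif_pos h0]
      rfl
    rw [dif_neg h0, dif_neg h0]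
    simp only []
    set p := m - 1
    set tag := p.unpair.1
    set a := p.unpair.2
    have hp : p < m := by omega
    have ha : a ≤ p := Nat.unpair_right_le p
    have ha1 : a.unpair.1 < m := by have := Nat.unpair_left_le a; omega
    have ha2 : a.unpair.2 < m := by have := Nat.unpair_right_le a; omega
    by_cases ht0 : tag = 0
    · rw [if_pos ht0, if_pos ht0]
      by_cases hak : a < k
      · rw [dif_pos hak, if_pos hak]
        rw [show Term.listEncode (Term.var (Sum.inr ⟨a, hak⟩) : LA.Term (Empty ⊕ Fin k)) =
          [Sum.inl (Sum.inr ⟨a, hak⟩)] from rfl]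
        rw [encode_single_term_sym]
        congr 2
        rw [Encodable.encode_inl, Encodable.encode_inr]
        show 4 * a + 2 = 2 * (2 * a + 1)
        ring
      · rw [dif_neg hak, if_neg hak]
        rfl
    rw [if_neg ht0, if_neg ht0]
    by_cases ht1 : tag = 1
    · rw [if_pos ht1, if_pos ht1]; rfl
    rw [if_neg ht1, if_neg ht1]
    by_cases ht2 : tag = 2
    · rw [if_pos ht2, if_pos ht2]; rfl
    rw [if_neg ht2, if_neg ht2]
    by_cases ht3 : tag = 3
    · rw [if_pos ht3, if_pos ht3]
      rw [show Term.listEncode (Functions.apply₂ ArithFunc.add (decT a.unpair.1 k)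
          (decT a.unpair.2 k)) = Sum.inr ⟨2, ArithFunc.add⟩ ::
          (Term.listEncode (decT a.unpair.1 k) ++ (Term.listEncode (decT a.unpair.2 k) ++ []))
          from rfl]
      rw [Encodable.encode_list_cons, List.append_nil]
      rw [ih a.unpair.1 ha1, ih a.unpair.2 ha2, appendC_encode]
      rfl
    rw [if_neg ht3, if_neg ht3]
    by_cases ht4 : tag = 4
    · rw [if_pos ht4, if_pos ht4]
      rw [show Term.listEncode (Functions.apply₂ ArithFunc.mul (decT a.unpair.1 k)
          (decT a.unpair.2 k)) = Sum.inr ⟨2, ArithFunc.mul⟩ ::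
          (Term.listEncode (decT a.unpair.1 k) ++ (Term.listEncode (decT a.unpair.2 k) ++ []))
          from rfl]
      rw [Encodable.encode_list_cons, List.append_nil]
      rw [ih a.unpair.1 ha1, ih a.unpair.2 ha2, appendC_encode]
      rfl
    rw [if_neg ht4, if_neg ht4]
    rfl
/-! ### Phase 2b': FN computes formula codes -/

abbrev FSym : Type := (Σ k, LA.Term (Empty ⊕ Fin k)) ⊕ ((Σ n, LA.Relations n) ⊕ ℕ)

theorem esym_nat (j : ℕ) :
    Encodable.encode ((Sum.inr (Sum.inr j)) : FSym) = 4 * j + 3 := by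
  rw [Encodable.encode_inr, Encodable.encode_inr, Encodable.encode_nat]
  ring

theorem esym_term (k' : ℕ) (t : LA.Term (Empty ⊕ Fin k')) :
    Encodable.encode ((Sum.inl ⟨k', t⟩) : FSym) =
      2 * Nat.pair k' (Encodable.encode t.listEncode) := by
  rw [Encodable.encode_inl, Encodable.encode_sigma_val]
  rfl

theorem esym_lt :
    Encodable.encode ((Sum.inr (Sum.inl ⟨2, ArithRel.lt⟩)) : FSym) = 1 := rfl

theorem FN_spec (n : ℕ) : ∀ k, FN k n = Encodable.encode (BoundedFormula.listEncode (decF n k)) := by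
  induction n using Nat.strong_induction_on with
  | _ n ih =>
    intro k
    rw [FN, decF]
    by_cases h0 : n = 0
    · rw [dif_pos h0, dif_pos h0]
      rw [show BoundedFormula.listEncode (BoundedFormula.falsum : LA.BoundedFormula Empty k) =
        [Sum.inr (Sum.inr (k + 2))] from rfl]
      rw [Encodable.encode_list_cons, Encodable.encode_list_nil, esym_nat]
      congr 2 <;> ring
    rw [dif_neg h0, dif_neg h0]
    simp only []
    set p := n - 1
    set tag := p.unpair.1
    set a := p.unpair.2
    have hp : p < n := by omega
    have ha : a ≤ p := Nat.unpair_right_le p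
    have ha1 : a.unpair.1 < n := by have := Nat.unpair_left_le a; omega
    have ha2 : a.unpair.2 < n := by have := Nat.unpair_right_le a; omega
    have hfals : Nat.pair (4 * k + 11) 0 + 1 =
        Encodable.encode (BoundedFormula.listEncode
          (BoundedFormula.falsum : LA.BoundedFormula Empty k)) := by
      rw [show BoundedFormula.listEncode (BoundedFormula.falsum : LA.BoundedFormula Empty k) =
        [Sum.inr (Sum.inr (k + 2))] from rfl]
      rw [Encodable.encode_list_cons, Encodable.encode_list_nil, esym_nat]
      congr 3 <;> ring
    by_cases ht1 : tag = 1
    · rw [if_pos ht1, if_pos ht1]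
      rw [show BoundedFormula.listEncode (BoundedFormula.equal (decT a.unpair.1 k)
          (decT a.unpair.2 k)) = [Sum.inl ⟨k, decT a.unpair.1 k⟩, Sum.inl ⟨k, decT a.unpair.2 k⟩]
          from rfl]
      simp only [Encodable.encode_list_cons, Encodable.encode_list_nil,
        esym_term, ← TN_spec]
    rw [if_neg ht1, if_neg ht1]
    by_cases ht2 : tag = 2
    · rw [if_pos ht2, if_pos ht2]
      rw [show BoundedFormula.listEncode (BoundedFormula.rel ArithRel.lt
          ![decT a.unpair.1 k, decT a.unpair.2 k]) =
          [Sum.inr (Sum.inl ⟨2, ArithRel.lt⟩), Sum.inr (Sum.inr k),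
            Sum.inl ⟨k, decT a.unpair.1 k⟩, Sum.inl ⟨k, decT a.unpair.2 k⟩] from rfl]
      simp only [Encodable.encode_list_cons, Encodable.encode_list_nil,
        esym_lt, esym_nat, esym_term, ← TN_spec]
    rw [if_neg ht2, if_neg ht2]
    by_cases ht3 : tag = 3
    · rw [if_pos ht3, if_pos ht3]
      rw [show BoundedFormula.listEncode (BoundedFormula.imp (decF a.unpair.1 k)
          (decF a.unpair.2 k)) = (Sum.inr (Sum.inr 0) : FSym) ::
          (BoundedFormula.listEncode (decF a.unpair.1 k) ++
            BoundedFormula.listEncode (decF a.unpair.2 k)) from rfl]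
      rw [Encodable.encode_list_cons, ih a.unpair.1 ha1 k, ih a.unpair.2 ha2 k, appendC_encode,
        esym_nat]
    rw [if_neg ht3, if_neg ht3]
    by_cases ht4 : tag = 4
    · rw [if_pos ht4, if_pos ht4]
      rw [show BoundedFormula.listEncode (BoundedFormula.all (decF a (k + 1))) =
          (Sum.inr (Sum.inr 1) : FSym) :: BoundedFormula.listEncode (decF a (k + 1)) from rfl]
      rw [Encodable.encode_list_cons, ih a (by omega) (k + 1), esym_nat]
    rw [if_neg ht4, if_neg ht4]
    exact hfals
/-! ### Phase 2c: TN and FN are primitive recursive -/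

theorem primrec_appendC : Primrec₂ appendC := by
  unfold appendC
  exact Primrec.encode.comp (Primrec.list_append.comp
    (Primrec.option_getD.comp (Primrec.decode.comp Primrec.fst) (Primrec.const []))
    (Primrec.option_getD.comp (Primrec.decode.comp Primrec.snd) (Primrec.const [])))

theorem getD_range_map {α : Type*} (f : ℕ → α) (dflt : α) (m i : ℕ) (h : i < m) :
    ((List.range m).map f).getD i dflt = f i := by
  rw [List.getD_eq_getElem _ _ (by simp [h])]
  simp

def tStep (k : ℕ) (prev : List ℕ) : ℕ :=
  if prev.length = 0 then 3
  else
    let p := prev.length - 1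
    let tag := p.unpair.1
    let a := p.unpair.2
    if tag = 0 then (if a < k then Nat.pair (4 * a + 2) 0 + 1 else 3)
    else if tag = 1 then 3
    else if tag = 2 then Nat.pair 3 0 + 1
    else if tag = 3 then
      Nat.pair 5 (appendC (prev.getD a.unpair.1 0) (prev.getD a.unpair.2 0)) + 1
    else if tag = 4 then
      Nat.pair 7 (appendC (prev.getD a.unpair.1 0) (prev.getD a.unpair.2 0)) + 1
    else 3

theorem primrec_tStep : Primrec₂ tStep := by
  have pk : Primrec fun q : ℕ × List ℕ => q.1 := Primrec.fst
  have pprev : Primrec fun q : ℕ × List ℕ => q.2 := Primrec.snd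
  have plen : Primrec fun q : ℕ × List ℕ => q.2.length := Primrec.list_length.comp pprev
  have pp : Primrec fun q : ℕ × List ℕ => q.2.length - 1 := Primrec.pred.comp plen
  have ptag : Primrec fun q : ℕ × List ℕ => (q.2.length - 1).unpair.1 :=
    Primrec.fst.comp (Primrec.unpair.comp pp)
  have pa : Primrec fun q : ℕ × List ℕ => (q.2.length - 1).unpair.2 :=
    Primrec.snd.comp (Primrec.unpair.comp pp)
  have pa1 : Primrec fun q : ℕ × List ℕ => (q.2.length - 1).unpair.2.unpair.1 :=
    Primrec.fst.comp (Primrec.unpair.comp pa)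
  have pa2 : Primrec fun q : ℕ × List ℕ => (q.2.length - 1).unpair.2.unpair.2 :=
    Primrec.snd.comp (Primrec.unpair.comp pa)
  have pv1 : Primrec fun q : ℕ × List ℕ => q.2.getD (q.2.length - 1).unpair.2.unpair.1 0 :=
    (Primrec.list_getD 0).comp pprev pa1
  have pv2 : Primrec fun q : ℕ × List ℕ => q.2.getD (q.2.length - 1).unpair.2.unpair.2 0 :=
    (Primrec.list_getD 0).comp pprev pa2
  have papp : Primrec fun q : ℕ × List ℕ =>
      appendC (q.2.getD (q.2.length - 1).unpair.2.unpair.1 0)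
        (q.2.getD (q.2.length - 1).unpair.2.unpair.2 0) :=
    primrec_appendC.comp pv1 pv2
  have pbr3 : Primrec fun q : ℕ × List ℕ =>
      Nat.pair 5 (appendC (q.2.getD (q.2.length - 1).unpair.2.unpair.1 0)
        (q.2.getD (q.2.length - 1).unpair.2.unpair.2 0)) + 1 :=
    Primrec.succ.comp (Primrec₂.natPair.comp (Primrec.const 5) papp)
  have pbr4 : Primrec fun q : ℕ × List ℕ =>
      Nat.pair 7 (appendC (q.2.getD (q.2.length - 1).unpair.2.unpair.1 0)
        (q.2.getD (q.2.length - 1).unpair.2.unpair.2 0)) + 1 :=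
    Primrec.succ.comp (Primrec₂.natPair.comp (Primrec.const 7) papp)
  have pvar : Primrec fun q : ℕ × List ℕ =>
      if (q.2.length - 1).unpair.2 < q.1 then
        Nat.pair (4 * (q.2.length - 1).unpair.2 + 2) 0 + 1 else 3 := by
    refine Primrec.ite (Primrec.nat_lt.comp pa pk) ?_ (Primrec.const 3)
    exact Primrec.succ.comp (Primrec₂.natPair.comp
      (Primrec.nat_add.comp (Primrec.nat_mul.comp (Primrec.const 4) pa) (Primrec.const 2))
      (Primrec.const 0))
  show Primrec fun q : ℕ × List ℕ => tStep q.1 q.2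
  unfold tStep
  refine Primrec.ite (Primrec.eq.comp plen (Primrec.const 0)) (Primrec.const 3) ?_
  refine Primrec.ite (Primrec.eq.comp ptag (Primrec.const 0)) pvar ?_
  refine Primrec.ite (Primrec.eq.comp ptag (Primrec.const 1)) (Primrec.const 3) ?_
  refine Primrec.ite (Primrec.eq.comp ptag (Primrec.const 2)) (Primrec.const (Nat.pair 3 0 + 1)) ?_
  refine Primrec.ite (Primrec.eq.comp ptag (Primrec.const 3)) pbr3 ?_
  exact Primrec.ite (Primrec.eq.comp ptag (Primrec.const 4)) pbr4 (Primrec.const 3)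

theorem tStep_spec (k m : ℕ) : tStep k ((List.range m).map (TN k)) = TN k m := by
  unfold tStep
  conv_rhs => rw [TN]
  simp only [List.length_map, List.length_range]
  by_cases h0 : m = 0
  · rw [if_pos h0, dif_pos h0]
  rw [if_neg h0, dif_neg h0]
  set p := m - 1
  set tag := p.unpair.1
  set a := p.unpair.2
  have ha : a ≤ p := Nat.unpair_right_le p
  have ha1 : a.unpair.1 < m := by have := Nat.unpair_left_le a; omega
  have ha2 : a.unpair.2 < m := by have := Nat.unpair_right_le a; omega
  rw [getD_range_map _ _ _ _ ha1, getD_range_map _ _ _ _ ha2]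

theorem primrec_TN : Primrec₂ TN := by
  refine Primrec.nat_strong_rec TN (g := fun k prev => some (tStep k prev)) ?_ ?_
  · exact Primrec.option_some.comp primrec_tStep
  · intro k m
    exact congrArg some (tStep_spec k m)

/-! FN via a table of all contexts `k ≤ N` -/

def eF (N n : ℕ) (prev : List (List ℕ)) (k : ℕ) : ℕ :=
  if k + n ≤ N then
    (if n = 0 then Nat.pair (4 * k + 11) 0 + 1
     else
      let p := n - 1
      let tag := p.unpair.1
      let a := p.unpair.2
      if tag = 1 then
        Nat.pair (2 * Nat.pair k (TN k a.unpair.1))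
          (Nat.pair (2 * Nat.pair k (TN k a.unpair.2)) 0 + 1) + 1
      else if tag = 2 then
        Nat.pair 1 (Nat.pair (4 * k + 3)
          (Nat.pair (2 * Nat.pair k (TN k a.unpair.1))
            (Nat.pair (2 * Nat.pair k (TN k a.unpair.2)) 0 + 1) + 1) + 1) + 1
      else if tag = 3 then
        Nat.pair 3 (appendC ((prev.getD a.unpair.1 []).getD k 0)
          ((prev.getD a.unpair.2 []).getD k 0)) + 1
      else if tag = 4 then Nat.pair 7 ((prev.getD a []).getD (k + 1) 0) + 1
      else Nat.pair (4 * k + 11) 0 + 1)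
  else 0

def fTab (N n : ℕ) : List ℕ :=
  (List.range (N + 1)).map fun k => if k + n ≤ N then FN k n else 0

theorem eF_spec (N n : ℕ) (k : ℕ) (hk : k < N + 1) :
    eF N n ((List.range n).map (fTab N)) k = if k + n ≤ N then FN k n else 0 := by
  unfold eF
  by_cases hkn : k + n ≤ N
  swap
  · rw [if_neg hkn, if_neg hkn]
  rw [if_pos hkn, if_pos hkn]
  conv_rhs => rw [FN]
  by_cases h0 : n = 0
  · rw [if_pos h0, dif_pos h0]
  rw [if_neg h0, dif_neg h0]
  simp only []
  set p := n - 1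
  set tag := p.unpair.1
  set a := p.unpair.2
  have ha : a ≤ p := Nat.unpair_right_le p
  have ha1 : a.unpair.1 < n := by have := Nat.unpair_left_le a; omega
  have ha2 : a.unpair.2 < n := by have := Nat.unpair_right_le a; omega
  have hb1 : ((List.range n).map (fTab N)).getD a.unpair.1 [] = fTab N a.unpair.1 :=
    getD_range_map _ _ _ _ ha1
  have hb2 : ((List.range n).map (fTab N)).getD a.unpair.2 [] = fTab N a.unpair.2 :=
    getD_range_map _ _ _ _ ha2
  have hba : ((List.range n).map (fTab N)).getD a [] = fTab N a :=
    getD_range_map _ _ _ _ (by omega)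
  rw [hb1, hb2, hba]
  have hv1 : (fTab N a.unpair.1).getD k 0 = FN k a.unpair.1 := by
    unfold fTab
    rw [getD_range_map _ _ _ _ hk, if_pos (by omega)]
  have hv2 : (fTab N a.unpair.2).getD k 0 = FN k a.unpair.2 := by
    unfold fTab
    rw [getD_range_map _ _ _ _ hk, if_pos (by omega)]
  have hva : (fTab N a).getD (k + 1) 0 = FN (k + 1) a := by
    unfold fTab
    rw [getD_range_map _ _ _ _ (by omega), if_pos (by omega)]
  rw [hv1, hv2, hva]

theorem primrec_eF : Primrec₂ fun (q : ℕ × List (List ℕ)) (k : ℕ) =>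
    eF q.1 q.2.length q.2 k := by
  set T : Type := (ℕ × List (List ℕ)) × ℕ with hT
  have pN : Primrec fun q : T => q.1.1 := Primrec.fst.comp Primrec.fst
  have pprev : Primrec fun q : T => q.1.2 := Primrec.snd.comp Primrec.fst
  have pk : Primrec fun q : T => q.2 := Primrec.snd
  have pn : Primrec fun q : T => q.1.2.length := Primrec.list_length.comp pprev
  have pp : Primrec fun q : T => q.1.2.length - 1 := Primrec.pred.comp pn
  have ptag : Primrec fun q : T => (q.1.2.length - 1).unpair.1 :=
    Primrec.fst.comp (Primrec.unpair.comp pp)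
  have pa : Primrec fun q : T => (q.1.2.length - 1).unpair.2 :=
    Primrec.snd.comp (Primrec.unpair.comp pp)
  have pa1 : Primrec fun q : T => (q.1.2.length - 1).unpair.2.unpair.1 :=
    Primrec.fst.comp (Primrec.unpair.comp pa)
  have pa2 : Primrec fun q : T => (q.1.2.length - 1).unpair.2.unpair.2 :=
    Primrec.snd.comp (Primrec.unpair.comp pa)
  have pTN1 : Primrec fun q : T => 2 * Nat.pair q.2 (TN q.2 (q.1.2.length - 1).unpair.2.unpair.1) :=
    Primrec.nat_mul.comp (Primrec.const 2) (Primrec₂.natPair.comp pk (primrec_TN.comp pk pa1))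
  have pTN2 : Primrec fun q : T => 2 * Nat.pair q.2 (TN q.2 (q.1.2.length - 1).unpair.2.unpair.2) :=
    Primrec.nat_mul.comp (Primrec.const 2) (Primrec₂.natPair.comp pk (primrec_TN.comp pk pa2))
  have pfal : Primrec fun q : T => Nat.pair (4 * q.2 + 11) 0 + 1 :=
    Primrec.succ.comp (Primrec₂.natPair.comp
      (Primrec.nat_add.comp (Primrec.nat_mul.comp (Primrec.const 4) pk) (Primrec.const 11))
      (Primrec.const 0))
  have pbr1 : Primrec fun q : T =>
      Nat.pair (2 * Nat.pair q.2 (TN q.2 (q.1.2.length - 1).unpair.2.unpair.1))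
        (Nat.pair (2 * Nat.pair q.2 (TN q.2 (q.1.2.length - 1).unpair.2.unpair.2)) 0 + 1) + 1 :=
    Primrec.succ.comp (Primrec₂.natPair.comp pTN1
      (Primrec.succ.comp (Primrec₂.natPair.comp pTN2 (Primrec.const 0))))
  have pbr2 : Primrec fun q : T =>
      Nat.pair 1 (Nat.pair (4 * q.2 + 3)
        (Nat.pair (2 * Nat.pair q.2 (TN q.2 (q.1.2.length - 1).unpair.2.unpair.1))
          (Nat.pair (2 * Nat.pair q.2 (TN q.2 (q.1.2.length - 1).unpair.2.unpair.2)) 0 + 1)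
          + 1) + 1) + 1 :=
    Primrec.succ.comp (Primrec₂.natPair.comp (Primrec.const 1)
      (Primrec.succ.comp (Primrec₂.natPair.comp
        (Primrec.nat_add.comp (Primrec.nat_mul.comp (Primrec.const 4) pk) (Primrec.const 3))
        (Primrec.succ.comp (Primrec₂.natPair.comp pTN1
          (Primrec.succ.comp (Primrec₂.natPair.comp pTN2 (Primrec.const 0))))))))
  have pbr3 : Primrec fun q : T =>
      Nat.pair 3 (appendC ((q.1.2.getD (q.1.2.length - 1).unpair.2.unpair.1 []).getD q.2 0)
        ((q.1.2.getD (q.1.2.length - 1).unpair.2.unpair.2 []).getD q.2 0)) + 1 :=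
    Primrec.succ.comp (Primrec₂.natPair.comp (Primrec.const 3) (primrec_appendC.comp
      ((Primrec.list_getD 0).comp ((Primrec.list_getD ([] : List ℕ)).comp pprev pa1) pk)
      ((Primrec.list_getD 0).comp ((Primrec.list_getD ([] : List ℕ)).comp pprev pa2) pk)))
  have pbr4 : Primrec fun q : T =>
      Nat.pair 7 ((q.1.2.getD (q.1.2.length - 1).unpair.2 []).getD (q.2 + 1) 0) + 1 :=
    Primrec.succ.comp (Primrec₂.natPair.comp (Primrec.const 7)
      ((Primrec.list_getD 0).comp ((Primrec.list_getD ([] : List ℕ)).comp pprev pa)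
        (Primrec.succ.comp pk)))
  show Primrec fun q : T => eF q.1.1 q.1.2.length q.1.2 q.2
  unfold eF
  refine Primrec.ite (Primrec.nat_le.comp (Primrec.nat_add.comp pk pn) pN) ?_ (Primrec.const 0)
  refine Primrec.ite (Primrec.eq.comp pn (Primrec.const 0)) pfal ?_
  refine Primrec.ite (Primrec.eq.comp ptag (Primrec.const 1)) pbr1 ?_
  refine Primrec.ite (Primrec.eq.comp ptag (Primrec.const 2)) pbr2 ?_
  refine Primrec.ite (Primrec.eq.comp ptag (Primrec.const 3)) pbr3 ?_
  exact Primrec.ite (Primrec.eq.comp ptag (Primrec.const 4)) pbr4 pfal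

theorem primrec_fTab : Primrec₂ fTab := by
  refine Primrec.nat_strong_rec fTab
    (g := fun N prev => some ((List.range (N + 1)).map (eF N prev.length prev))) ?_ ?_
  · refine Primrec.option_some.comp ?_
    refine Primrec.list_map (Primrec.list_range.comp (Primrec.succ.comp Primrec.fst)) ?_
    exact primrec_eF
  · intro N n
    refine congrArg some ?_
    have hlen : ((List.range n).map (fTab N)).length = n := by simp
    rw [hlen]
    unfold fTab
    refine List.map_congr_left fun k hk => ?_
    exact eF_spec N n k (List.mem_range.1 hk)

def GN (N : ℕ) : ℕ := (fTab N N).getD 0 0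

theorem primrec_GN : Primrec GN :=
  (Primrec.list_getD 0).comp (primrec_fTab.comp Primrec.id Primrec.id) (Primrec.const 0)

theorem GN_eq (N : ℕ) : GN N = FN 0 N := by
  unfold GN fTab
  rw [getD_range_map _ _ _ _ (by omega), if_pos (by omega)]
/-! ### Phase 3: assembly -/

theorem GN_godelCode (N : ℕ) : GN N = godelCode (decF N 0) := by
  rw [GN_eq, FN_spec]
  rfl

theorem range_GN (n : ℕ) : (∃ N, GN N = n) ↔ (∃ η : LA.Sentence, godelCode η = n) := by
  constructor
  · rintro ⟨N, rfl⟩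
    exact ⟨decF N 0, (GN_godelCode N).symm⟩
  · rintro ⟨η, rfl⟩
    obtain ⟨N, hN⟩ := decF_surj (k := 0) η
    exact ⟨N, by rw [GN_godelCode, hN]⟩

theorem code_defin : Defin (fun v : Fin 1 → ℕ => ∃ η : LA.Sentence, godelCode η = v 0) := by
  have hGN : Nat.Primrec GN := Primrec.nat_iff.1 primrec_GN
  have graph : Defin (fun v : Fin 2 → ℕ => GN (v 0) = v 1) := primrec_defin hGN
  have h1 : Defin (fun u : Fin 1 ⊕ Fin 1 → ℕ => GN (u (Sum.inr 0)) = u (Sum.inl 0)) :=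
    graph.subst ![Sum.inr 0, Sum.inl 0]
  refine h1.ex1.congr fun v => ?_
  simp only [Sum.elim_inl, Sum.elim_inr]
  exact range_GN (v 0)

/-- Tarski's Undefinability Theorem implies the Semantic Diagonal Lemma. -/
theorem stmt3
    (tarski : ¬ ∃ Γ : LA.Formula (Fin 1), ∀ n : ℕ,
      ((∃ η : LA.Sentence, godelCode η = n ∧ ℕ ⊨ η) ↔ Γ.Realize (M := ℕ) (fun _ => n))) :
    ∀ Ψ : LA.Formula (Fin 1), ∃ θ : LA.Sentence, (RealizeAtCode Ψ θ ↔ ℕ ⊨ θ) := by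
  intro Ψ
  by_contra hno
  push_neg at hno
  have hΘ : ∀ θ : LA.Sentence, ¬ RealizeAtCode Ψ θ ↔ ℕ ⊨ θ := fun θ => by have := hno θ; tauto
  obtain ⟨φC, hφC⟩ := code_defin
  refine tarski ⟨φC ⊓ Ψ.not, fun n => ?_⟩
  rw [Formula.realize_inf, Formula.realize_not, hφC]
  constructor
  · rintro ⟨η, hcode, hη⟩
    subst hcode
    exact ⟨⟨η, rfl⟩, (hΘ η).2 hη⟩
  · rintro ⟨⟨η, hcode⟩, hnΨ⟩
    subst hcode
    exact ⟨η, rfl, (hΘ η).1 hnΨ⟩
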